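/- Let N ≥ 1, σ > 0, let φ_0 = 0 and φ_1, …, φ_N ∈ ℝ^M, and let K be the (N+1)×(N+1) matrix with entries K_{n,n'} = exp(−‖φ_n − φ_{n'}‖²/(4σ²)). Let λ* ∈ ℝ^{N+1} be a probability vector. Suppose K is invertible, every entry of the vector K^{-1}𝟙 is nonzero (𝟙 the all-ones vector), and λ̃ maximizes the Jensen-bound objective f over S with all entries of λ̃ strictly positive. Then there exists c > 0 such that λ̃ = c · K^{-1}( λ* / (K^{-1}𝟙) ), where the division of vectors is elementwise. -/

import Mathlib

open scoped BigOperators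

lemma aux_log (a x : ℝ) (ha : 0 < a) (hx : -(a/2) ≤ x) :
    x/a - 2*(x/a)^2 ≤ Real.log (a + x) - Real.log a := by
  have h1 : 0 < a + x := by linarith
  have h3 : Real.log (a/(a+x)) ≤ a/(a+x) - 1 := Real.log_le_sub_one_of_pos (by positivity)
  have h4 : Real.log (a/(a+x)) = Real.log a - Real.log (a+x) :=
    Real.log_div (ne_of_gt ha) (ne_of_gt h1)
  rw [h4] at h3
  have e1 : (1:ℝ) - a/(a+x) = x/(a+x) := by field_simp; ring
  have h5 : x/a - 2*(x/a)^2 ≤ x/(a+x) := by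
    have e2 : x/a - 2*(x/a)^2 = (x*a - 2*x^2)/a^2 := by field_simp
    rw [e2, div_le_div_iff₀ (by positivity) h1]
    nlinarith [sq_nonneg x, mul_nonneg (sq_nonneg x) (by linarith : (0:ℝ) ≤ a + 2*x)]
  linarith

lemma aux_zero (s C ε : ℝ) (hC : 0 ≤ C) (hε : 0 < ε)
    (h : ∀ t : ℝ, |t| ≤ ε → t*s - t^2*C ≤ 0) : s = 0 := by
  by_contra hs
  have hs' : 0 < |s| := abs_pos.mpr hs
  set t0 : ℝ := min ε (|s|/(C+1)) with ht0
  have ht0pos : 0 < t0 := lt_min hε (by positivity)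
  have ht0le : t0 ≤ ε := min_le_left _ _
  have ht0le2 : t0 ≤ |s|/(C+1) := min_le_right _ _
  set t : ℝ := if 0 ≤ s then t0 else -t0 with ht
  have habs : |t| = t0 := by
    rcases le_or_gt 0 s with h' | h'
    · rw [ht, if_pos h', abs_of_pos ht0pos]
    · rw [ht, if_neg (not_le.mpr h'), abs_neg, abs_of_pos ht0pos]
  have hts : t * s = t0 * |s| := by
    rcases le_or_gt 0 s with h' | h'
    · rw [ht, if_pos h', abs_of_nonneg h']
    · rw [ht, if_neg (not_le.mpr h'), abs_of_neg h']; ring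
  have h0 := h t (by rw [habs]; exact ht0le)
  rw [hts, ← sq_abs t, habs] at h0
  have h6 : |s| ≤ t0 * C := by
    have h6' : t0 * |s| ≤ t0 * (t0 * C) := by nlinarith
    exact le_of_mul_le_mul_left h6' ht0pos
  have h7 : t0 * C ≤ (|s|/(C+1)) * C := mul_le_mul_of_nonneg_right ht0le2 hC
  have h8 : (|s|/(C+1)) * C < |s| := by
    rw [div_mul_eq_mul_div, div_lt_iff₀ (by linarith)]
    nlinarith
  linarith

/-- characterization of the maximizer of the Jensen bound for a
single sensor group under AWGN. -/
theorem stmt_3 (M N : ℕ) (hN : 1 ≤ N) (σ : ℝ) (hσ : 0 < σ)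
    (φ : Fin (N + 1) → EuclideanSpace ℝ (Fin M)) (hφ0 : φ 0 = 0)
    (K : Matrix (Fin (N + 1)) (Fin (N + 1)) ℝ)
    (hK : ∀ n n', K n n' = Real.exp (-(‖φ n - φ n'‖ ^ 2) / (4 * σ ^ 2)))
    (lamStar : Fin (N + 1) → ℝ)
    (hlamStar_nonneg : ∀ n, 0 ≤ lamStar n) (hlamStar_sum : ∑ n, lamStar n = 1)
    (hKinv : IsUnit K.det)
    (hone : ∀ n, K⁻¹.mulVec (fun _ => (1 : ℝ)) n ≠ 0)
    (lamT : Fin (N + 1) → ℝ)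
    (hlamT_mem : (∀ n, 0 ≤ lamT n) ∧ ∑ n, lamT n ≤ 1)
    (hmax : ∀ lam : Fin (N + 1) → ℝ, (∀ n, 0 ≤ lam n) → ∑ n, lam n ≤ 1 →
      ∑ n, lamStar n * Real.log (K.mulVec lam n)
        ≤ ∑ n, lamStar n * Real.log (K.mulVec lamT n))
    (hposT : ∀ n, 0 < lamT n) :
    ∃ c : ℝ, 0 < c ∧
      lamT = c • K⁻¹.mulVec
        (fun n => lamStar n / K⁻¹.mulVec (fun _ => (1 : ℝ)) n) := by
  have hKpos : ∀ n m, 0 < K n m := fun n m => by rw [hK]; exact Real.exp_pos _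
  have hKsymm : ∀ n m, K n m = K m n := fun n m => by
    rw [hK, hK, norm_sub_rev]
  set a : Fin (N + 1) → ℝ := K.mulVec lamT with ha_def
  have ha_eq : ∀ n, a n = ∑ m, K n m * lamT m := fun n => rfl
  have ha : ∀ n, 0 < a n := by
    intro n
    rw [ha_eq]
    exact Finset.sum_pos (fun m _ => mul_pos (hKpos n m) (hposT m)) Finset.univ_nonempty
  -- stationarity
  have key : ∀ i j : Fin (N + 1),
      (∑ n, lamStar n / a n * K n i) = ∑ n, lamStar n / a n * K n j := by
    intro i j
    set d : Fin (N + 1) → ℝ := fun n => K n i - K n j with hd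
    set s : ℝ := ∑ n, lamStar n * (d n / a n) with hs
    set C : ℝ := ∑ n, lamStar n * (2 * (d n / a n) ^ 2) with hC
    have hCnn : 0 ≤ C :=
      Finset.sum_nonneg fun n _ => mul_nonneg (hlamStar_nonneg n) (by positivity)
    -- choose epsilon
    set ε1 : ℝ := Finset.univ.inf' Finset.univ_nonempty lamT with hε1
    set ε2 : ℝ := Finset.univ.inf' Finset.univ_nonempty
      (fun n => a n / (2 * (|d n| + 1))) with hε2
    have hε1pos : 0 < ε1 := by
      rw [hε1, Finset.lt_inf'_iff]; exact fun n _ => hposT n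
    have hε2pos : 0 < ε2 := by
      rw [hε2, Finset.lt_inf'_iff]
      intro n _
      exact div_pos (ha n) (by positivity)
    set ε : ℝ := min ε1 ε2 with hε
    have hεpos : 0 < ε := lt_min hε1pos hε2pos
    have hεlam : ∀ n, ε ≤ lamT n := fun n =>
      le_trans (min_le_left _ _) (Finset.inf'_le _ (Finset.mem_univ n))
    have hεd : ∀ n, ε ≤ a n / (2 * (|d n| + 1)) := fun n =>
      le_trans (min_le_right _ _) (Finset.inf'_le _ (Finset.mem_univ n))
    have hs0 : s = 0 := by
      apply aux_zero s C ε hCnn hεpos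
      intro t htle
      set e : Fin (N + 1) → ℝ :=
        fun n => (if n = i then (1:ℝ) else 0) - (if n = j then (1:ℝ) else 0) with he
      set lam' : Fin (N + 1) → ℝ := fun n => lamT n + t * e n with hlam'
      have he_abs : ∀ n, |e n| ≤ 1 := by
        intro n
        rw [he, abs_le]
        constructor <;> dsimp only <;> split_ifs <;> norm_num
      have hte : ∀ n, |t * e n| ≤ ε := by
        intro n
        rw [abs_mul]
        calc |t| * |e n| ≤ ε * 1 :=
              mul_le_mul htle (he_abs n) (abs_nonneg _) (le_of_lt hεpos)
          _ = ε := mul_one ε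
      have hnn : ∀ n, 0 ≤ lam' n := by
        intro n
        have := neg_abs_le (t * e n)
        have h2 := hte n
        have h3 := hεlam n
        rw [hlam']; dsimp only; linarith
      have hsumlam : ∑ n, lam' n ≤ 1 := by
        have hesum : ∑ n, e n = 0 := by
          rw [he]
          rw [Finset.sum_sub_distrib]
          simp
        have : ∑ n, lam' n = ∑ n, lamT n + t * ∑ n, e n := by
          rw [hlam', Finset.sum_add_distrib, ← Finset.mul_sum]
        rw [this, hesum, mul_zero, add_zero]
        exact hlamT_mem.2
      have hmv : ∀ n, K.mulVec lam' n = a n + t * d n := by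
        intro n
        show ∑ m, K n m * lam' m = a n + t * d n
        have : ∀ m, K n m * lam' m = K n m * lamT m + t * (K n m * e m) := by
          intro m; rw [hlam']; ring
        rw [Finset.sum_congr rfl fun m _ => this m, Finset.sum_add_distrib,
          ← Finset.mul_sum, ← ha_eq]
        congr 1
        congr 1
        rw [he, hd]
        simp [mul_sub, Finset.sum_sub_distrib, mul_ite, mul_one, mul_zero]
      have htd : ∀ n, -(a n / 2) ≤ t * d n := by
        intro n
        have h1 : |t * d n| ≤ ε * (|d n| + 1) := by
          rw [abs_mul]
          exact mul_le_mul htle (by linarith [abs_nonneg (d n)]) (abs_nonneg _)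
            (le_of_lt hεpos)
        have h2 : ε * (|d n| + 1) ≤ a n / 2 := by
          have h3 := hεd n
          have hpos : (0:ℝ) < 2 * (|d n| + 1) := by positivity
          rw [le_div_iff₀ hpos] at h3
          linarith
        have h4 := neg_abs_le (t * d n)
        exact le_trans (neg_le_neg (le_trans h1 h2)) h4
      have H := hmax lam' hnn hsumlam
      have H' : ∑ n, lamStar n * Real.log (a n + t * d n)
          ≤ ∑ n, lamStar n * Real.log (a n) := by
        calc ∑ n, lamStar n * Real.log (a n + t * d n)
            = ∑ n, lamStar n * Real.log (K.mulVec lam' n) :=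
              Finset.sum_congr rfl fun n _ => by rw [hmv n]
          _ ≤ ∑ n, lamStar n * Real.log (K.mulVec lamT n) := H
          _ = ∑ n, lamStar n * Real.log (a n) := rfl
      have e1 : t * s - t ^ 2 * C
          = ∑ n, lamStar n * (t * d n / a n - 2 * (t * d n / a n) ^ 2) := by
        rw [hs, hC, Finset.mul_sum, Finset.mul_sum, ← Finset.sum_sub_distrib]
        exact Finset.sum_congr rfl fun n _ => by ring
      have e2 : ∑ n, lamStar n * (t * d n / a n - 2 * (t * d n / a n) ^ 2)
          ≤ ∑ n, lamStar n * (Real.log (a n + t * d n) - Real.log (a n)) := by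
        apply Finset.sum_le_sum
        intro n _
        exact mul_le_mul_of_nonneg_left
          (aux_log (a n) (t * d n) (ha n) (htd n)) (hlamStar_nonneg n)
      have e3 : ∑ n, lamStar n * (Real.log (a n + t * d n) - Real.log (a n))
          = (∑ n, lamStar n * Real.log (a n + t * d n))
              - ∑ n, lamStar n * Real.log (a n) := by
        rw [← Finset.sum_sub_distrib]
        exact Finset.sum_congr rfl fun n _ => by ring
      linarith
    have hdiff : (∑ n, lamStar n / a n * K n i) - (∑ n, lamStar n / a n * K n j) = s := by
      rw [hs, ← Finset.sum_sub_distrib]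
      exact Finset.sum_congr rfl fun n _ => by simp only [hd]; ring
    linarith
  -- linear algebra part
  set u : Fin (N + 1) → ℝ := fun n => lamStar n / a n with hu_def
  set α : ℝ := ∑ n, u n * K n 0 with hα_def
  set b : Fin (N + 1) → ℝ := K⁻¹.mulVec (fun _ => (1 : ℝ)) with hb_def
  have hKu : K.mulVec u = fun _ => α := by
    funext i
    show ∑ m, K i m * u m = α
    rw [hα_def]
    calc ∑ m, K i m * u m = ∑ m, lamStar m / a m * K m i :=
          Finset.sum_congr rfl fun m _ => by rw [hKsymm i m, hu_def]; ring
      _ = ∑ m, lamStar m / a m * K m 0 := key i 0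
      _ = ∑ n, u n * K n 0 := Finset.sum_congr rfl fun m _ => by rw [hu_def]
  have hconst : (fun _ : Fin (N + 1) => α) = α • (fun _ : Fin (N + 1) => (1:ℝ)) := by
    funext n; simp
  have hu_eq : u = α • b := by
    calc u = (K⁻¹ * K).mulVec u := by
          rw [Matrix.nonsing_inv_mul K hKinv, Matrix.one_mulVec]
      _ = K⁻¹.mulVec (K.mulVec u) := by rw [← Matrix.mulVec_mulVec]
      _ = K⁻¹.mulVec (α • fun _ => (1:ℝ)) := by rw [hKu, hconst]
      _ = α • b := by rw [Matrix.mulVec_smul, hb_def]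
  have hu' : ∀ n, lamStar n / a n = α * b n := fun n => by
    have := congrFun hu_eq n
    rw [hu_def] at this
    simpa using this
  have hls : ∀ n, lamStar n = α * b n * a n := by
    intro n
    have h := hu' n
    rw [div_eq_iff (ha n).ne'] at h
    exact h
  have hw : (fun n => lamStar n / b n) = α • a := by
    funext n
    rw [hls n, Pi.smul_apply, smul_eq_mul]
    field_simp [hone n]
  have hfinal : K⁻¹.mulVec (fun n => lamStar n / b n) = α • lamT := by
    rw [hw, Matrix.mulVec_smul]
    congr 1
    rw [ha_def, Matrix.mulVec_mulVec, Matrix.nonsing_inv_mul K hKinv,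
      Matrix.one_mulVec]
  have hba : ∑ n, b n * a n = ∑ n, lamT n := by
    have hKb : K.mulVec b = fun _ => (1:ℝ) := by
      rw [hb_def, Matrix.mulVec_mulVec, Matrix.mul_nonsing_inv K hKinv,
        Matrix.one_mulVec]
    calc ∑ n, b n * a n = ∑ n, ∑ m, b n * (K n m * lamT m) := by
          exact Finset.sum_congr rfl fun n _ => by
            rw [ha_eq n, Finset.mul_sum]
      _ = ∑ m, ∑ n, b n * (K n m * lamT m) := Finset.sum_comm
      _ = ∑ m, lamT m * ∑ n, K m n * b n := by
          refine Finset.sum_congr rfl fun m _ => ?_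
          rw [Finset.mul_sum]
          exact Finset.sum_congr rfl fun n _ => by rw [hKsymm m n]; ring
      _ = ∑ m, lamT m * (K.mulVec b) m := rfl
      _ = ∑ m, lamT m := by rw [hKb]; simp
  have hsum1 : (1:ℝ) = α * ∑ n, lamT n := by
    calc (1:ℝ) = ∑ n, lamStar n := hlamStar_sum.symm
      _ = ∑ n, α * b n * a n := Finset.sum_congr rfl fun n _ => hls n
      _ = α * ∑ n, b n * a n := by rw [Finset.mul_sum]; exact Finset.sum_congr rfl fun n _ => by ring
      _ = α * ∑ n, lamT n := by rw [hba]
  have hT : 0 < ∑ n, lamT n :=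
    Finset.sum_pos (fun n _ => hposT n) Finset.univ_nonempty
  have hαpos : 0 < α := by nlinarith
  refine ⟨∑ n, lamT n, hT, ?_⟩
  rw [hfinal, smul_smul]
  rw [show (∑ n, lamT n) * α = 1 by rw [mul_comm]; linarith [hsum1]]
  rw [one_smul]
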